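/- For every integer n ≥ 1500, setting δ = ⌊4·√(n/32)⌋, one has 4^{-n} · Σ_{i = -δ+1}^{δ} C(2n, n+i) > 0.6088. -/

import Mathlib

set_option maxHeartbeats 1000000

open Real Finset MeasureTheory

/-- Binomial coefficient with integer lower index, following the convention
`C(n,k) = 0` for `k < 0` (and `k > n`). -/
def chooseZ (n : ℕ) (k : ℤ) : ℕ := if 0 ≤ k then n.choose k.toNat else 0



lemma exp_le_poly {x : ℝ} (h0 : 0 ≤ x) (h1 : x ≤ 1) :
    Real.exp x ≤ 1 + x + x^2/2 + x^3/6 + 5*x^4/96 := by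
  have h := Real.exp_bound (x := x) (by rw [abs_of_nonneg h0]; exact h1) (n := 4) (by norm_num)
  rw [abs_of_nonneg h0] at h
  have h2 := (abs_sub_le_iff.1 h).1
  have hs : ∑ m ∈ Finset.range 4, x ^ m / m.factorial = 1 + x + x^2/2 + x^3/6 := by
    rw [Finset.sum_range_succ, Finset.sum_range_succ, Finset.sum_range_succ,
      Finset.sum_range_succ, Finset.sum_range_zero]
    norm_num [Nat.factorial]
  rw [hs] at h2
  norm_num [Nat.factorial] at h2
  nlinarith
lemma exp_neg_bounds {x : ℝ} (h0 : 0 ≤ x) (h1 : x ≤ 1) :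
    1 - x + x^2/2 - x^3/6 - 5*x^4/96 ≤ Real.exp (-x) ∧
    Real.exp (-x) ≤ 1 - x + x^2/2 - x^3/6 + 5*x^4/96 := by
  have h := Real.exp_bound (x := -x) (by rw [abs_neg, abs_of_nonneg h0]; exact h1) (n := 4) (by norm_num)
  rw [abs_neg, abs_of_nonneg h0] at h
  have hs : ∑ m ∈ Finset.range 4, (-x) ^ m / m.factorial = 1 - x + x^2/2 - x^3/6 := by
    rw [Finset.sum_range_succ, Finset.sum_range_succ, Finset.sum_range_succ,
      Finset.sum_range_succ, Finset.sum_range_zero]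
    norm_num [Nat.factorial]; ring
  rw [hs] at h
  norm_num [Nat.factorial] at h
  have h2 := abs_sub_le_iff.1 h
  constructor <;> nlinarith [h2.1, h2.2]

lemma exp_neg_le_poly {x : ℝ} (h0 : 0 ≤ x) (h1 : x ≤ 1) :
    Real.exp (-x) ≤ 1 - x + x^2/2 - x^3/6 + 5*x^4/96 := (exp_neg_bounds h0 h1).2
lemma ratio_le_exp {t : ℝ} (h0 : 0 ≤ t) (h1 : t < 1) :
    (1 - t)/(1 + t) ≤ Real.exp (-(2*t)) := by
  have hpos : (0:ℝ) < 1 + t := by linarith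
  have main : (1 - t) * Real.exp (2*t) ≤ 1 + t := by
    rcases le_or_gt t 0.77 with hc | hc
    · have hq := exp_le_poly h0 h1.le
      set q : ℝ := 1 + t + t^2/2 + t^3/6 + 5*t^4/96 with hqdef
      have hqpos : 0 < q := by positivity
      have h1q : (1 - t) * q ≤ 1 - t^2/2 - t^3/6 := by
        nlinarith [pow_nonneg h0 4, pow_nonneg h0 5]
      have hp2 : (1 - t^2/2 - t^3/6)^2 ≤ (1-t)*(1+t) := by
        nlinarith [pow_nonneg h0 3, pow_nonneg h0 4, pow_nonneg h0 5, pow_nonneg h0 6]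
      have he2 : Real.exp (2*t) = Real.exp t * Real.exp t := by
        rw [← Real.exp_add]; ring_nf
      have hexp : (1-t) * Real.exp (2*t) ≤ (1-t) * (q*q) := by
        rw [he2]
        have hqq : Real.exp t * Real.exp t ≤ q * q := by nlinarith [Real.exp_pos t]
        nlinarith [sub_nonneg.2 h1.le]
      have hkey : (1-t) * (q*q) ≤ 1 + t := by
        have h1t : 0 < 1 - t := by linarith
        have heq : (1-t)*(q*q) = ((1-t)*q)^2 / (1-t) := by field_simp
        rw [heq, div_le_iff₀ h1t]
        calc ((1-t)*q)^2 ≤ (1 - t^2/2 - t^3/6)^2 := by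
              apply sq_le_sq' _ h1q
              nlinarith [mul_nonneg h1t.le hqpos.le]
          _ ≤ (1-t)*(1+t) := hp2
          _ = (1+t)*(1-t) := by ring
      linarith
    · have hub : (1-t)*Real.exp (2*t) ≤ (1-t)*Real.exp 2 := by
        have hle : Real.exp (2*t) ≤ Real.exp 2 := Real.exp_le_exp.2 (by linarith)
        nlinarith [Real.exp_pos (2*t), sub_nonneg.2 h1.le]
      have he2 : Real.exp 2 ≤ 7.39 := by
        have h := Real.exp_one_lt_d9
        have hh : Real.exp 2 = Real.exp 1 * Real.exp 1 := by rw [← Real.exp_add]; norm_num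
        rw [hh]; nlinarith [Real.exp_pos 1]
      nlinarith [Real.exp_pos 2]
  rw [Real.exp_neg, inv_eq_one_div, div_le_div_iff₀ hpos (Real.exp_pos _)]
  linarith


lemma exp_le_ratio {t : ℝ} (h0 : 0 ≤ t) (h1 : t ≤ 0.1) :
    Real.exp (-(2*t) - 2*t^3) ≤ (1 - t)/(1 + t) := by
  have hpos : (0:ℝ) < 1 + t := by linarith
  have hx0 : 0 ≤ 2*t + 2*t^3 := by positivity
  have ht3 : t^3 ≤ 0.001 := by nlinarith [pow_le_pow_left₀ h0 h1 3]
  have hx1 : 2*t + 2*t^3 ≤ 1 := by nlinarith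
  have h := exp_neg_le_poly hx0 hx1
  have he : Real.exp (-(2*t) - 2*t^3) = Real.exp (-(2*t+2*t^3)) := by ring_nf
  rw [he]
  rw [le_div_iff₀ hpos]
  refine le_trans (mul_le_mul_of_nonneg_right h hpos.le) ?_
  nlinarith [pow_nonneg h0 2, pow_nonneg h0 3, pow_nonneg h0 4, pow_nonneg h0 5,
    pow_nonneg h0 6, pow_nonneg h0 7, pow_nonneg h0 8, pow_nonneg h0 9,
    pow_nonneg h0 10, pow_nonneg h0 11, pow_nonneg h0 12, pow_nonneg h0 13]

-- exact ratio identity in ℝ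
lemma choose_ratio (n j : ℕ) (hj : j < n) :
    (((2*n).choose (n+j+1) : ℝ)) = ((2*n).choose (n+j) : ℝ) * (((n:ℝ) - j)/((n:ℝ)+j+1)) := by
  have h := Nat.choose_succ_right_eq (2*n) (n+j)
  have hsub : 2*n - (n+j) = n - j := by omega
  rw [hsub] at h
  have hc : (((2*n).choose (n+j+1) : ℝ)) * ((n:ℝ)+j+1) = ((2*n).choose (n+j) : ℝ) * ((n:ℝ)-j) := by
    have := congrArg (fun x : ℕ => (x : ℝ)) h
    push_cast [Nat.cast_sub hj.le] at this
    push_cast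
    linarith [this]
  have hpos : ((n:ℝ)+j+1) ≠ 0 := by positivity
  field_simp
  linarith [hc]

lemma upper_bound (n : ℕ) (hn : 1 ≤ n) (j : ℕ) :
    ((2*n).choose (n+j) : ℝ) ≤ ((2*n).choose n : ℝ) * Real.exp (-(j:ℝ)^2 / ((n:ℝ)+1/2)) := by
  set m : ℝ := (n:ℝ) + 1/2 with hm
  have hmpos : 0 < m := by positivity
  induction j with
  | zero => simp
  | succ j ih =>
    rcases le_or_gt (j+1) n with hjn | hjn
    · have hjlt : j < n := hjn
      have harr : n + (j+1) = n + j + 1 := by omega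
      rw [harr, choose_ratio n j hjlt]
      have ht0 : (0:ℝ) ≤ (2*(j:ℝ)+1)/(2*m) := by positivity
      have ht1 : (2*(j:ℝ)+1)/(2*m) < 1 := by
        rw [div_lt_one (by positivity)]
        have : (j:ℝ) < n := by exact_mod_cast hjlt
        rw [hm]; linarith
      have hr := ratio_le_exp ht0 ht1
      have hid1 : 1 - (2*(j:ℝ)+1)/(2*m) = ((n:ℝ) - j)/m := by
        rw [hm]; field_simp; ring
      have hid2 : 1 + (2*(j:ℝ)+1)/(2*m) = ((n:ℝ)+j+1)/m := by
        rw [hm]; field_simp; ring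
      have hratio : ((n:ℝ) - j)/((n:ℝ)+j+1) ≤ Real.exp (-((2*(j:ℝ)+1)/m)) := by
        have : ((n:ℝ) - j)/((n:ℝ)+j+1) = (1 - (2*(j:ℝ)+1)/(2*m))/(1 + (2*(j:ℝ)+1)/(2*m)) := by
          rw [hid1, hid2, div_div_div_cancel_right₀]
          exact hmpos.ne'
        rw [this]
        convert hr using 2
        field_simp
      have hfj : (0:ℝ) ≤ ((2*n).choose (n+j) : ℝ) := by positivity
      calc ((2*n).choose (n+j) : ℝ) * (((n:ℝ) - j)/((n:ℝ)+j+1))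
          ≤ (((2*n).choose n : ℝ) * Real.exp (-(j:ℝ)^2 / m)) * Real.exp (-((2*(j:ℝ)+1)/m)) := by
            apply mul_le_mul ih hratio _ (by positivity)
            have : (0:ℝ) ≤ (n:ℝ) - j := by
              have : (j:ℝ) ≤ n := by exact_mod_cast hjlt.le
              linarith
            positivity
        _ = ((2*n).choose n : ℝ) * Real.exp (-((j:ℝ)+1)^2 / m) := by
            rw [mul_assoc, ← Real.exp_add]
            congr 2
            field_simp; ring
        _ = ((2*n).choose n : ℝ) * Real.exp (-(((j:ℕ)+1 : ℕ):ℝ)^2 / m) := by push_cast; ring_nf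
    · have hz : (2*n).choose (n+(j+1)) = 0 := by
        apply Nat.choose_eq_zero_of_lt; omega
      rw [hz]
      simp only [Nat.cast_zero]
      positivity

lemma lower_bound (n δ : ℕ) (hn : 1500 ≤ n) (hδn : 2*δ^2 ≤ n) :
    ∀ j, j ≤ δ →
      ((2*n).choose n : ℝ) *
        Real.exp (-(j:ℝ)^2/((n:ℝ)+1/2) - 2*(j:ℝ)*(δ:ℝ)^3/((n:ℝ)+1/2)^3)
        ≤ ((2*n).choose (n+j) : ℝ) := by
  set m : ℝ := (n:ℝ) + 1/2 with hm
  have hmpos : 0 < m := by positivity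
  have h10 : 10*δ ≤ n := by nlinarith
  intro j
  induction j with
  | zero => intro _; norm_num
  | succ j ih =>
    intro hj1
    have hjδ : j < δ := hj1
    have ihj := ih (le_of_lt hjδ)
    have hjn : j < n := by omega
    have harr : n + (j+1) = n + j + 1 := by omega
    rw [harr, choose_ratio n j hjn]
    set t : ℝ := (2*(j:ℝ)+1)/(2*m) with htdef
    have ht0 : 0 ≤ t := by positivity
    have hjr : (j:ℝ) + 1 ≤ (δ:ℝ) := by exact_mod_cast hj1
    have ht01 : t ≤ 0.1 := by
      rw [htdef, div_le_iff₀ (by positivity)]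
      have hδr : 10*(δ:ℝ) ≤ n := by exact_mod_cast h10
      rw [hm]; linarith
    have hr := exp_le_ratio ht0 ht01
    have hid : (1 - t)/(1 + t) = ((n:ℝ) - j)/((n:ℝ)+j+1) := by
      rw [htdef]
      have h1 : 1 - (2*(j:ℝ)+1)/(2*m) = ((n:ℝ) - j)/m := by rw [hm]; field_simp; ring
      have h2 : 1 + (2*(j:ℝ)+1)/(2*m) = ((n:ℝ)+j+1)/m := by rw [hm]; field_simp; ring
      rw [h1, h2, div_div_div_cancel_right₀]
      exact hmpos.ne'
    rw [hid] at hr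
    have hstep : Real.exp (-(((j:ℝ)+1))^2/m - 2*((j:ℝ)+1)*(δ:ℝ)^3/m^3)
        ≤ Real.exp (-(j:ℝ)^2/m - 2*(j:ℝ)*(δ:ℝ)^3/m^3) * Real.exp (-(2*t) - 2*t^3) := by
      rw [← Real.exp_add]
      apply Real.exp_le_exp.2
      have ht3 : t^3 ≤ (δ:ℝ)^3/m^3 := by
        have htle : t ≤ (δ:ℝ)/m := by
          rw [htdef, div_le_div_iff₀ (by positivity) hmpos]
          ring_nf
          nlinarith [hmpos]
        calc t^3 ≤ ((δ:ℝ)/m)^3 := by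
              apply pow_le_pow_left₀ ht0 htle
          _ = (δ:ℝ)^3/m^3 := by rw [div_pow]
      have hteq : 2*t = (2*(j:ℝ)+1)/m := by rw [htdef]; field_simp
      rw [hteq]
      have : -(((j:ℝ)+1))^2/m = -(j:ℝ)^2/m - (2*(j:ℝ)+1)/m := by field_simp; ring
      rw [this]
      have hexpand : 2*((j:ℝ)+1)*(δ:ℝ)^3/m^3 = 2*(j:ℝ)*(δ:ℝ)^3/m^3 + 2*((δ:ℝ)^3/m^3) := by ring
      linarith
    calc ((2*n).choose n : ℝ) * Real.exp (-(((j:ℕ)+1:ℕ):ℝ)^2/m - 2*(((j:ℕ)+1:ℕ):ℝ)*(δ:ℝ)^3/m^3)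
        = ((2*n).choose n : ℝ) * Real.exp (-(((j:ℝ)+1))^2/m - 2*((j:ℝ)+1)*(δ:ℝ)^3/m^3) := by
          push_cast; ring_nf
      _ ≤ ((2*n).choose n : ℝ) * (Real.exp (-(j:ℝ)^2/m - 2*(j:ℝ)*(δ:ℝ)^3/m^3) * Real.exp (-(2*t) - 2*t^3)) := by
          apply mul_le_mul_of_nonneg_left hstep (by positivity)
      _ = (((2*n).choose n : ℝ) * Real.exp (-(j:ℝ)^2/m - 2*(j:ℝ)*(δ:ℝ)^3/m^3)) * Real.exp (-(2*t) - 2*t^3) := by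
          ring
      _ ≤ ((2*n).choose (n+j) : ℝ) * (((n:ℝ) - j)/((n:ℝ)+j+1)) := by
          apply mul_le_mul ihj hr (Real.exp_pos _).le (by positivity)

-- antitonicity of the gaussian on nonneg reals
lemma gauss_anti {m : ℝ} (hm : 0 < m) {A : ℝ} :
    AntitoneOn (fun x : ℝ => Real.exp (-x^2/m)) (Set.Icc 0 A) := by
  intro x hx y hy hxy
  simp only
  apply Real.exp_le_exp.2
  have hsq : x^2 ≤ y^2 := by nlinarith [hx.1, hy.1]
  have h2 : x^2/m ≤ y^2/m := by gcongr ?_ / m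
  rw [neg_div, neg_div]
  linarith

-- lower bound on the central integral
lemma int_lower {m : ℝ} (hm : 0 < m) (d : ℝ) (hd0 : 0 ≤ d) (hd : d^2 ≤ m) :
    d - d^3/(3*m) + d^5/(10*m^2) - d^7/(42*m^3) - 5*d^9/(864*m^4)
      ≤ ∫ x in (0:ℝ)..d, Real.exp (-x^2/m) := by
  have hpoly : ∫ x in (0:ℝ)..d,
      (1 - x^2/m + x^4/(2*m^2) - x^6/(6*m^3) - 5*x^8/(96*m^4))
      = d - d^3/(3*m) + d^5/(10*m^2) - d^7/(42*m^3) - 5*d^9/(864*m^4) := by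
    have F : ∀ x ∈ Set.uIcc (0:ℝ) d, HasDerivAt
        (fun x : ℝ => x - x^3/(3*m) + x^5/(10*m^2) - x^7/(42*m^3) - 5*(x^9/(864*m^4)))
        (1 - x^2/m + x^4/(2*m^2) - x^6/(6*m^3) - 5*x^8/(96*m^4)) x := by
      intro x _
      have h := ((((hasDerivAt_id x).sub ((hasDerivAt_pow 3 x).div_const (3*m))).add
        ((hasDerivAt_pow 5 x).div_const (10*m^2))).sub
        ((hasDerivAt_pow 7 x).div_const (42*m^3))).sub
        (((hasDerivAt_pow 9 x).div_const (864*m^4)).const_mul 5)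
      refine h.congr_deriv ?_
      field_simp
      ring
    rw [intervalIntegral.integral_eq_sub_of_hasDerivAt F]
    · norm_num; ring
    · apply Continuous.intervalIntegrable; fun_prop
  rw [← hpoly]
  apply intervalIntegral.integral_mono_on hd0
  · apply Continuous.intervalIntegrable; fun_prop
  · apply Continuous.intervalIntegrable; fun_prop
  · intro x hx
    have hx0 : 0 ≤ x := hx.1
    have hy1 : x^2/m ≤ 1 := by
      rw [div_le_one hm]
      nlinarith [hx.2]
    have h := (exp_neg_bounds (by positivity) hy1).1
    calc 1 - x^2/m + x^4/(2*m^2) - x^6/(6*m^3) - 5*x^8/(96*m^4)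
        = 1 - x^2/m + (x^2/m)^2/2 - (x^2/m)^3/6 - 5*(x^2/m)^4/96 := by
          field_simp
      _ ≤ Real.exp (-(x^2/m)) := h
      _ = Real.exp (-x^2/m) := by rw [neg_div]

-- upper bound: half-line gaussian
lemma int_upper {m : ℝ} (hm : 0 < m) (N : ℕ) :
    ∫ x in (0:ℝ)..(N:ℝ), Real.exp (-x^2/m) ≤ Real.sqrt (Real.pi * m) / 2 := by
  have hb : (0:ℝ) < 1/m := by positivity
  have hint : Integrable (fun x : ℝ => Real.exp (-(1/m) * x^2)) := integrable_exp_neg_mul_sq hb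
  have heq : ∀ x : ℝ, Real.exp (-x^2/m) = Real.exp (-(1/m) * x^2) := by
    intro x; congr 1; field_simp
  have h1 : ∫ x in (0:ℝ)..(N:ℝ), Real.exp (-x^2/m)
      = ∫ x in Set.Ioc (0:ℝ) (N:ℝ), Real.exp (-(1/m) * x^2) := by
    rw [intervalIntegral.integral_of_le (by positivity)]
    congr 1; ext x; rw [heq]
  rw [h1]
  have h2 : ∫ x in Set.Ioc (0:ℝ) (N:ℝ), Real.exp (-(1/m) * x^2)
      ≤ ∫ x in Set.Ioi (0:ℝ), Real.exp (-(1/m) * x^2) := by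
    apply setIntegral_mono_set hint.integrableOn
    · filter_upwards with x using (Real.exp_pos _).le
    · apply HasSubset.Subset.eventuallyLE
      exact Set.Ioc_subset_Ioi_self
  have h3 := integral_gaussian_Ioi (1/m)
  rw [h3] at h2
  calc _ ≤ Real.sqrt (Real.pi / (1/m)) / 2 := h2
    _ = Real.sqrt (Real.pi * m) / 2 := by
        congr 2
        field_simp

-- denominator identity
lemma denom_id (n : ℕ) (hn : 1 ≤ n) :
    (4:ℝ)^n = ((2*n).choose n : ℝ) + 2 * ∑ j ∈ range n, ((2*n).choose (n+(j+1)) : ℝ) := by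
  have h4 : (4:ℝ)^n = ((2:ℝ)^(2*n)) := by
    rw [pow_mul]; norm_num
  have hs' := Nat.sum_range_choose (2*n)
  have hsum : ∑ k ∈ range (2*n+1), ((2*n).choose k : ℝ) = (2:ℝ)^(2*n) := by
    exact_mod_cast congrArg (fun x : ℕ => (x:ℝ)) hs'
  rw [h4, ← hsum]
  rw [← Finset.sum_range_add_sum_Ico (fun k => ((2*n).choose k : ℝ)) (show n ≤ 2*n+1 by omega)]
  have h1 : ∑ k ∈ range n, ((2*n).choose k : ℝ) = ∑ j ∈ range n, ((2*n).choose (n+(j+1)) : ℝ) := by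
    rw [← Finset.sum_range_reflect]
    apply Finset.sum_congr rfl
    intro j hj
    have hj' : j < n := Finset.mem_range.1 hj
    congr 1
    have h' : n - 1 - j = 2*n - (n+(j+1)) := by omega
    rw [h', Nat.choose_symm (by omega)]
  have h2 : ∑ k ∈ Finset.Ico n (2*n+1), ((2*n).choose k : ℝ)
      = ((2*n).choose n : ℝ) + ∑ j ∈ range n, ((2*n).choose (n+(j+1)) : ℝ) := by
    rw [Finset.sum_Ico_eq_sum_range]
    have h' : 2*n+1-n = n+1 := by omega
    rw [h', Finset.sum_range_succ']
    simp only [Nat.add_zero]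
    exact add_comm _ _
  rw [h1, h2]; ring

-- numerator reindex
lemma numer_id (n δ : ℕ) (hδ1 : 1 ≤ δ) (hδn : δ ≤ n) :
    ∑ i ∈ Finset.Icc (-(δ : ℤ) + 1) (δ : ℤ), (chooseZ (2 * n) ((n : ℤ) + i) : ℝ)
      = ∑ j ∈ range δ, ((2*n).choose (n+j) : ℝ)
        + ∑ j ∈ range δ, ((2*n).choose (n+(j+1)) : ℝ) := by
  have hsplit : Finset.Icc (-(δ : ℤ) + 1) (δ : ℤ)
      = Finset.Icc (-(δ : ℤ) + 1) 0 ∪ Finset.Ioc (0:ℤ) (δ : ℤ) := by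
    ext x
    simp only [Finset.mem_Icc, Finset.mem_Ioc, Finset.mem_union]
    omega
  rw [hsplit, Finset.sum_union]
  · congr 1
    · apply Finset.sum_nbij' (i := fun i : ℤ => (-i).toNat) (j := fun j : ℕ => -(j:ℤ))
      · intro i hi; simp only [Finset.mem_Icc] at hi; simp only [Finset.mem_range]; omega
      · intro j hj; simp only [Finset.mem_range] at hj; simp only [Finset.mem_Icc]; omega
      · intro i hi; simp only [Finset.mem_Icc] at hi; omega
      · intro j hj; simp only [Finset.mem_range] at hj; omega
      · intro i hi
        simp only [Finset.mem_Icc] at hi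
        have h0 : (0:ℤ) ≤ (n:ℤ) + i := by omega
        have htn : ((n:ℤ) + i).toNat = n - (-i).toNat := by omega
        rw [chooseZ, if_pos h0, htn]
        congr 1
        have hle : (-i).toNat ≤ n := by omega
        have h' : n - (-i).toNat = 2*n - (n + (-i).toNat) := by omega
        rw [h', Nat.choose_symm (by omega)]
    · apply Finset.sum_nbij' (i := fun i : ℤ => i.toNat - 1) (j := fun j : ℕ => ((j:ℤ) + 1))
      · intro i hi; simp only [Finset.mem_Ioc] at hi; simp only [Finset.mem_range]; omega
      · intro j hj; simp only [Finset.mem_range] at hj; simp only [Finset.mem_Ioc]; omega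
      · intro i hi; simp only [Finset.mem_Ioc] at hi; omega
      · intro j hj; simp only [Finset.mem_range] at hj; omega
      · intro i hi
        simp only [Finset.mem_Ioc] at hi
        have h0 : (0:ℤ) ≤ (n:ℤ) + i := by omega
        have htn : ((n:ℤ) + i).toNat = n + (i.toNat - 1 + 1) := by omega
        rw [chooseZ, if_pos h0, htn]
  · apply Finset.disjoint_left.2
    intro i hi hi2
    simp only [Finset.mem_Icc] at hi
    simp only [Finset.mem_Ioc] at hi2
    omega

lemma endgame_num (r d K S : ℝ) (hr27 : 27 ≤ r) (hdr : r - 1 < d)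
    (hKlow : K ≥ 1 - 1/3000)
    (hS : S ≤ 2.5067*r + 0.029) :
    0.6088 * (1 + S) < 2 * (K * (0.8545 * d)) - 1 := by
  have hd0 : (0:ℝ) < d := by linarith
  have hKd : K * d ≥ (1 - 1/3000) * (r - 1) := by nlinarith
  nlinarith

lemma sqrt_pi_m_bound (r : ℝ) (hr : 27 ≤ r) :
    Real.sqrt (Real.pi * (2*r^2 + 1/2)) ≤ 2.5067*r + 0.029 := by
  have hpi : Real.pi ≤ 3.1416 := by linarith [Real.pi_lt_d6]
  have hle : Real.pi * (2*r^2 + 1/2) ≤ (2.5067*r + 0.029)^2 := by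
    nlinarith [Real.pi_pos]
  calc Real.sqrt (Real.pi * (2*r^2 + 1/2)) ≤ Real.sqrt ((2.5067*r + 0.029)^2) :=
        Real.sqrt_le_sqrt hle
    _ = 2.5067*r + 0.029 := Real.sqrt_sq (by linarith)

theorem stmt11 (n : ℕ) (hn : 1500 ≤ n) (δ : ℕ)
    (hδ : δ = ⌊4 * Real.sqrt ((n : ℝ) / 32)⌋₊) :
    (∑ i ∈ Finset.Icc (-(δ : ℤ) + 1) (δ : ℤ), (chooseZ (2 * n) ((n : ℤ) + i) : ℝ)) / 4 ^ n
      > 0.6088 := by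
  -- basic facts about δ
  have hs : 4 * Real.sqrt ((n : ℝ) / 32) = Real.sqrt ((n:ℝ)/2) := by
    rw [show ((n:ℝ)/2) = 16 * ((n:ℝ)/32) by ring, Real.sqrt_mul (by norm_num),
      show (16:ℝ) = 4^2 by norm_num, Real.sqrt_sq (by norm_num)]
  rw [hs] at hδ
  have hnR : (1500:ℝ) ≤ (n:ℝ) := by exact_mod_cast hn
  have hn2 : (0:ℝ) ≤ (n:ℝ)/2 := by positivity
  have hδub : (δ:ℝ) ≤ Real.sqrt ((n:ℝ)/2) := by
    rw [hδ]; exact Nat.floor_le (Real.sqrt_nonneg _)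
  have hδlb : Real.sqrt ((n:ℝ)/2) - 1 < (δ:ℝ) := by
    rw [hδ]; have := Nat.lt_floor_add_one (Real.sqrt ((n:ℝ)/2)); linarith
  have hδsq : (δ:ℝ)^2 ≤ (n:ℝ)/2 := by
    calc (δ:ℝ)^2 ≤ (Real.sqrt ((n:ℝ)/2))^2 := by
          apply pow_le_pow_left₀ (Nat.cast_nonneg _) hδub
      _ = (n:ℝ)/2 := Real.sq_sqrt hn2
  have hδn2 : 2*δ^2 ≤ n := by
    have h' : ((2*δ^2 : ℕ):ℝ) ≤ (n:ℝ) := by push_cast; linarith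
    exact_mod_cast h'
  have hr27 : (27:ℝ) ≤ Real.sqrt ((n:ℝ)/2) := by
    rw [show (27:ℝ) = Real.sqrt (27^2) by rw [Real.sqrt_sq]; norm_num]
    apply Real.sqrt_le_sqrt
    norm_num; linarith
  have hδ1 : 1 ≤ δ := by
    have h' : (1:ℝ) ≤ (δ:ℝ) := by linarith
    exact_mod_cast h'
  have hδlen : δ ≤ n := by nlinarith [hδn2, hδ1]
  -- notation
  set m : ℝ := (n:ℝ) + 1/2 with hm
  have hmpos : (0:ℝ) < m := by positivity
  have hf0 : (0:ℝ) < ((2*n).choose n : ℝ) := by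
    exact_mod_cast Nat.choose_pos (by omega)
  set f0 : ℝ := ((2*n).choose n : ℝ) with hf0def
  -- lower bound for the numerator sum
  have hK : Real.exp (-(1/(2*(n:ℝ)))) ≥ 1 - 1/(2*(n:ℝ)) := by
    have := Real.add_one_le_exp (-(1/(2*(n:ℝ))))
    linarith
  have hterm_lo : ∀ j ∈ range δ,
      f0 * (Real.exp (-(1/(2*(n:ℝ)))) * Real.exp (-(j:ℝ)^2/m)) ≤ ((2*n).choose (n+j) : ℝ) := by
    intro j hj
    have hjδ : j < δ := Finset.mem_range.1 hj
    have hlb := lower_bound n δ hn hδn2 j hjδ.le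
    refine le_trans ?_ hlb
    rw [← Real.exp_add]
    apply mul_le_mul_of_nonneg_left _ hf0.le
    apply Real.exp_le_exp.2
    have hjr : (j:ℝ) ≤ (δ:ℝ) := by exact_mod_cast hjδ.le
    have hj0 : (0:ℝ) ≤ (j:ℝ) := Nat.cast_nonneg _
    have hδ0 : (0:ℝ) ≤ (δ:ℝ) := Nat.cast_nonneg _
    have herr : 2*(j:ℝ)*(δ:ℝ)^3/m^3 ≤ 1/(2*(n:ℝ)) := by
      rw [div_le_div_iff₀ (by positivity) (by positivity)]
      have hmn : (n:ℝ) ≤ m := by rw [hm]; linarith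
      have hm3 : (n:ℝ)^3 ≤ m^3 := by
        apply pow_le_pow_left₀ (by linarith) hmn
      have hδ4 : (δ:ℝ)^4 ≤ (n:ℝ)^2/4 := by nlinarith [hδsq, sq_nonneg ((δ:ℝ)^2)]
      have h1 : 2*(j:ℝ)*(δ:ℝ)^3 ≤ 2*(δ:ℝ)^4 := by nlinarith [pow_nonneg hδ0 3]
      nlinarith [hm3, hδ4, h1, hnR]
    linarith
  -- numerator
  have hnum := numer_id n δ hδ1 hδlen
  have hsum1 : ∑ j ∈ range δ, ((2*n).choose (n+(j+1)) : ℝ)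
      ≥ ∑ j ∈ range δ, ((2*n).choose (n+j) : ℝ) - f0 := by
    have e1 : ∑ j ∈ range (δ+1), ((2*n).choose (n+j) : ℝ)
        = ∑ j ∈ range δ, ((2*n).choose (n+(j+1)) : ℝ) + ((2*n).choose (n+0) : ℝ) :=
      Finset.sum_range_succ' _ _
    have e2 : ∑ j ∈ range (δ+1), ((2*n).choose (n+j) : ℝ)
        = ∑ j ∈ range δ, ((2*n).choose (n+j) : ℝ) + ((2*n).choose (n+δ) : ℝ) :=
      Finset.sum_range_succ _ _
    have h3 : (0:ℝ) ≤ ((2*n).choose (n+δ) : ℝ) := Nat.cast_nonneg _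
    simp only [Nat.add_zero] at e1
    rw [hf0def]
    linarith [e1, e2, h3]
  -- Gaussian sum lower bound via the integral
  have hanti : AntitoneOn (fun x : ℝ => Real.exp (-x^2/m)) (Set.Icc (0:ℝ) (0 + (δ:ℕ))) :=
    gauss_anti hmpos
  have hA := AntitoneOn.integral_le_sum hanti
  simp only [zero_add] at hA
  have hδm : ((δ:ℕ):ℝ)^2 ≤ m := by rw [hm]; push_cast; nlinarith [hδsq]
  have hIl := int_lower hmpos ((δ:ℕ):ℝ) (Nat.cast_nonneg _) hδm
  -- polynomial bound : ∫ ≥ 0.8545 δ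
  have hpoly : (δ:ℝ) - (δ:ℝ)^3/(3*m) + (δ:ℝ)^5/(10*m^2) - (δ:ℝ)^7/(42*m^3) - 5*(δ:ℝ)^9/(864*m^4)
      ≥ 0.8545 * (δ:ℝ) := by
    set s : ℝ := (δ:ℝ)^2/m with hsdef
    have hs0 : 0 ≤ s := by positivity
    have hs12 : s ≤ 1/2 := by
      rw [hsdef, div_le_iff₀ hmpos, hm]
      nlinarith [hδsq]
    have hfact : (δ:ℝ) - (δ:ℝ)^3/(3*m) + (δ:ℝ)^5/(10*m^2) - (δ:ℝ)^7/(42*m^3) - 5*(δ:ℝ)^9/(864*m^4)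
        = (δ:ℝ) * (1 - s/3 + s^2/10 - s^3/42 - 5*s^4/864) := by
      rw [hsdef]; field_simp
    rw [hfact]
    have hg : 1 - s/3 + s^2/10 - s^3/42 - 5*s^4/864 ≥ 0.8545 := by
      nlinarith [hs0, hs12, sq_nonneg s, sq_nonneg (s - 1/2), mul_nonneg hs0 hs0,
        mul_nonneg (mul_nonneg hs0 hs0) hs0, mul_nonneg (mul_nonneg (mul_nonneg hs0 hs0) hs0) hs0]
    have hδ0 : (0:ℝ) ≤ (δ:ℝ) := Nat.cast_nonneg _
    nlinarith [hδ0, hg]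
  have hAlow : ∑ i ∈ range δ, Real.exp (-((i:ℕ):ℝ)^2/m) ≥ 0.8545 * (δ:ℝ) := by
    calc ∑ i ∈ range δ, Real.exp (-((i:ℕ):ℝ)^2/m)
        ≥ ∫ x in (0:ℝ)..((δ:ℕ):ℝ), Real.exp (-x^2/m) := hA
      _ ≥ 0.8545 * (δ:ℝ) := by linarith [hIl, hpoly]
  -- putting the numerator together
  set K : ℝ := Real.exp (-(1/(2*(n:ℝ)))) with hKdef
  have hKpos : 0 < K := Real.exp_pos _
  have hSlow : ∑ i ∈ Finset.Icc (-(δ : ℤ) + 1) (δ : ℤ), (chooseZ (2 * n) ((n : ℤ) + i) : ℝ)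
      ≥ 2 * (f0 * K * (0.8545 * (δ:ℝ))) - f0 := by
    rw [hnum]
    have hs1 : ∑ j ∈ range δ, ((2*n).choose (n+j) : ℝ) ≥ f0 * K * (0.8545 * (δ:ℝ)) := by
      calc ∑ j ∈ range δ, ((2*n).choose (n+j) : ℝ)
          ≥ ∑ j ∈ range δ, f0 * (K * Real.exp (-(j:ℝ)^2/m)) := Finset.sum_le_sum hterm_lo
        _ = f0 * K * ∑ j ∈ range δ, Real.exp (-(j:ℝ)^2/m) := by
            rw [Finset.mul_sum]
            apply Finset.sum_congr rfl
            intro j _; ring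
        _ ≥ f0 * K * (0.8545 * (δ:ℝ)) := by
            apply mul_le_mul_of_nonneg_left _ (by positivity)
            exact hAlow
    linarith [hsum1, hs1]
  -- denominator upper bound
  have hterm_up : ∀ j ∈ range n,
      ((2*n).choose (n+(j+1)) : ℝ) ≤ f0 * Real.exp (-(((j:ℕ)+1:ℕ):ℝ)^2/m) := by
    intro j _
    have := upper_bound n (by omega) (j+1)
    rw [hm]
    exact_mod_cast this
  have hBsum : ∑ j ∈ range n, Real.exp (-(((j:ℕ)+1:ℕ):ℝ)^2/m) ≤ Real.sqrt (Real.pi * m) / 2 := by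
    have hanti2 : AntitoneOn (fun x : ℝ => Real.exp (-x^2/m)) (Set.Icc (0:ℝ) (0 + (n:ℕ))) :=
      gauss_anti hmpos
    have hB := AntitoneOn.sum_le_integral hanti2
    simp only [zero_add] at hB
    calc ∑ j ∈ range n, Real.exp (-(((j:ℕ)+1:ℕ):ℝ)^2/m)
        ≤ ∫ x in (0:ℝ)..((n:ℕ):ℝ), Real.exp (-x^2/m) := hB
      _ ≤ Real.sqrt (Real.pi * m) / 2 := int_upper hmpos n
  have hden : (4:ℝ)^n ≤ f0 * (1 + Real.sqrt (Real.pi * m)) := by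
    rw [denom_id n (by omega)]
    have h1 : ∑ j ∈ range n, ((2*n).choose (n+(j+1)) : ℝ)
        ≤ f0 * (Real.sqrt (Real.pi * m) / 2) := by
      calc ∑ j ∈ range n, ((2*n).choose (n+(j+1)) : ℝ)
          ≤ ∑ j ∈ range n, f0 * Real.exp (-(((j:ℕ)+1:ℕ):ℝ)^2/m) := Finset.sum_le_sum hterm_up
        _ = f0 * ∑ j ∈ range n, Real.exp (-(((j:ℕ)+1:ℕ):ℝ)^2/m) := by rw [Finset.mul_sum]
        _ ≤ f0 * (Real.sqrt (Real.pi * m) / 2) := by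
            apply mul_le_mul_of_nonneg_left hBsum hf0.le
    rw [hf0def] at *
    linarith [h1]
  -- numeric endgame
  set r : ℝ := Real.sqrt ((n:ℝ)/2) with hrdef
  have hr2 : r^2 = (n:ℝ)/2 := Real.sq_sqrt hn2
  have hmval : m = 2*r^2 + 1/2 := by rw [hm, hr2]; ring
  have hsqpi : Real.sqrt (Real.pi * m) ≤ 2.5067*r + 0.029 := by
    rw [hmval]; exact sqrt_pi_m_bound r hr27
  have hKlow : K ≥ 1 - 1/3000 := by
    have h1 : 1/(2*(n:ℝ)) ≤ 1/3000 := by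
      rw [div_le_div_iff₀ (by linarith) (by norm_num)]
      linarith
    rw [hKdef]
    linarith [hK]
  have hstep : 0.6088 * (1 + Real.sqrt (Real.pi * m)) < 2 * (K * (0.8545 * (δ:ℝ))) - 1 :=
    endgame_num r (δ:ℝ) K (Real.sqrt (Real.pi * m)) hr27 hδlb hKlow hsqpi
  have hcore : 0.6088 * (f0 * (1 + Real.sqrt (Real.pi * m)))
      < 2 * (f0 * K * (0.8545 * (δ:ℝ))) - f0 := by
    nlinarith [mul_lt_mul_of_pos_left hstep hf0]
  have h4pos : (0:ℝ) < (4:ℝ)^n := by positivity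
  rw [gt_iff_lt, lt_div_iff₀ h4pos]
  calc 0.6088 * (4:ℝ)^n ≤ 0.6088 * (f0 * (1 + Real.sqrt (Real.pi * m))) := by
        nlinarith [hden]
    _ < 2 * (f0 * K * (0.8545 * (δ:ℝ))) - f0 := hcore
    _ ≤ _ := hSlow
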